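/- (Deterministic LASSO support result.) Suppose the active submatrix H_{c,S*} has rank ℓ* and there exists κ ∈ (0,1] such that (i) max_{k∈S̄*} ‖θ̂ₙ⁽ᵏ⁾‖₁ ≤ 1−κ, where θ̂ₙ⁽ᵏ⁾ = (H_{c,S*}ᵀH_{c,S*})⁻¹H_{c,S*}ᵀH_{c,k} is the OLS regression of column H_{c,k} on H_{c,S*}, and (ii) max_{k∈S̄*} |(H_{c,k} − H_{c,S*}θ̂ₙ⁽ᵏ⁾)ᵀ ε_c⁽ⁿ⁾| ≤ κ·λ·n. Then the LASSO minimizer β̂ₙˡᵃˢˢᵒ(f) is unique, its support is contained in S*, and max_{k∈S*} |β̂ⁿˡᵃˢˢᵒ_{n,k}(f) − β*_k(f)| ≤ max_{k∈S*} |β̂*_{n,k} − β*_k(f)| + n·λ·‖(H_{c,S*}ᵀH_{c,S*})⁻¹‖_∞, where β̂ₙ* = (H_{c,S*}ᵀH_{c,S*})⁻¹H_{c,S*}ᵀf_c⁽ⁿ⁾ is the OLS oracle estimate on the active columns. -/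

import Mathlib

open scoped BigOperators Matrix

open scoped BigOperators

lemma slope_nonpos (a C δ : ℝ) (hδ : 0 < δ) (h : ∀ s, 0 < s → s < δ → a ≤ s * C) : a ≤ 0 := by
  by_contra h'
  push_neg at h'
  rcases le_or_gt C 0 with hC | hC
  · have := h (δ/2) (by linarith) (by linarith)
    nlinarith
  · have hs : 0 < min (δ/2) (a/(2*C)) := lt_min (by linarith) (by positivity)
    have := h _ hs (lt_of_le_of_lt (min_le_left _ _) (by linarith))
    have h2 : min (δ/2) (a/(2*C)) * C ≤ (a/(2*C)) * C :=
      mul_le_mul_of_nonneg_right (min_le_right _ _) hC.le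
    have h3 : (a/(2*C)) * C = a/2 := by field_simp
    linarith

lemma lasso_kkt (n m : ℕ) (hn : 0 < n) (lam : ℝ) (hlam : 0 < lam)
    (Hc : Matrix (Fin n) (Fin m) ℝ) (fc : Fin n → ℝ) (β : Fin m → ℝ)
    (hmin : ∀ γ : Fin m → ℝ,
      (2 * n : ℝ)⁻¹ * (∑ i, (fc i - Hc.mulVec β i) ^ 2) + lam * ∑ k, |β k|
        ≤ (2 * n : ℝ)⁻¹ * (∑ i, (fc i - Hc.mulVec γ i) ^ 2) + lam * ∑ k, |γ k|)
    (j : Fin m) :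
    |∑ i, Hc i j * (fc i - Hc.mulVec β i)| ≤ lam * n ∧
    (∑ i, Hc i j * (fc i - Hc.mulVec β i)) * β j = lam * n * |β j| := by
  have hnR : (0:ℝ) < n := by exact_mod_cast hn
  set g : ℝ := ∑ i, Hc i j * (fc i - Hc.mulVec β i) with hg
  set c : ℝ := ∑ i, (Hc i j) ^ 2 with hc
  have hcnn : 0 ≤ c := Finset.sum_nonneg fun i _ => sq_nonneg _
  have h2n : (0:ℝ) < 2 * n := by linarith
  -- key inequality
  have key : ∀ t : ℝ, 2 * t * g - t ^ 2 * c ≤ 2 * n * (lam * (|β j + t| - |β j|)) := by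
    intro t
    have h1 := hmin (fun k => β k + if k = j then t else 0)
    have hmv : ∀ i, Hc.mulVec (fun k => β k + if k = j then t else 0) i
        = Hc.mulVec β i + t * Hc i j := by
      intro i
      simp only [Matrix.mulVec, dotProduct, mul_add, Finset.sum_add_distrib]
      congr 1
      rw [Finset.sum_eq_single j]
      · simp [mul_comm]
      · intro k _ hk; simp [hk]
      · simp
    have hq : ∑ i, (fc i - Hc.mulVec (fun k => β k + if k = j then t else 0) i) ^ 2
        = (∑ i, (fc i - Hc.mulVec β i) ^ 2) - (2 * t * g - t ^ 2 * c) := by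
      have he : ∀ i, (fc i - Hc.mulVec (fun k => β k + if k = j then t else 0) i) ^ 2
          = (fc i - Hc.mulVec β i) ^ 2
            - (2 * t * (Hc i j * (fc i - Hc.mulVec β i)) - t ^ 2 * (Hc i j) ^ 2) := by
        intro i; rw [hmv i]; ring
      rw [Finset.sum_congr rfl fun i _ => he i, Finset.sum_sub_distrib,
          Finset.sum_sub_distrib, ← Finset.mul_sum, ← Finset.mul_sum, hg, hc]
    have hl1 : ∑ k, |β k + if k = j then t else 0|
        = (∑ k, |β k|) + (|β j + t| - |β j|) := by
      have he : ∀ k, |β k + if k = j then t else 0|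
          = |β k| + (if k = j then |β j + t| - |β j| else 0) := by
        intro k; by_cases h : k = j
        · subst h; rw [if_pos rfl, if_pos rfl]; ring
        · rw [if_neg h, if_neg h]; ring
      rw [Finset.sum_congr rfl fun k _ => he k, Finset.sum_add_distrib,
          Finset.sum_ite_eq' Finset.univ j, if_pos (Finset.mem_univ j)]
    rw [hq, hl1] at h1
    have hexp : (2*(n:ℝ))⁻¹ * ((∑ i, (fc i - Hc.mulVec β i) ^ 2) - (2 * t * g - t ^ 2 * c))
        = (2*(n:ℝ))⁻¹ * (∑ i, (fc i - Hc.mulVec β i) ^ 2)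
          - (2*(n:ℝ))⁻¹ * (2 * t * g - t ^ 2 * c) := by ring
    rw [hexp] at h1
    have h2 : (2*(n:ℝ))⁻¹ * (2 * t * g - t ^ 2 * c) ≤ lam * (|β j + t| - |β j|) := by
      linarith
    rw [inv_mul_le_iff₀ h2n] at h2
    exact h2
  constructor
  · -- |g| ≤ lam * n
    have hs := slope_nonpos (|g| - lam * n) (c/2) 1 one_pos ?_
    · linarith
    intro s hs0 _
    set e : ℝ := if 0 ≤ g then (1:ℝ) else -1 with he
    have heg : e * g = |g| := by
      rcases le_or_gt 0 g with h | h
      · rw [he, if_pos h, one_mul, abs_of_nonneg h]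
      · rw [he, if_neg (not_le.mpr h), abs_of_neg h]; ring
    have he2 : e ^ 2 = 1 := by
      rcases le_or_gt 0 g with h | h
      · rw [he, if_pos h]; norm_num
      · rw [he, if_neg (not_le.mpr h)]; norm_num
    have habse : |s * e| = s := by
      rcases le_or_gt 0 g with h | h
      · rw [he, if_pos h, mul_one, abs_of_pos hs0]
      · rw [he, if_neg (not_le.mpr h)]
        rw [abs_of_nonpos (by nlinarith)]; ring
    have hk := key (s * e)
    have habs : |β j + s * e| - |β j| ≤ s := by
      have h1 := abs_add_le (β j) (s * e)
      have h2 := abs_abs_sub_abs_le_abs_sub (β j + s * e) (β j)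
      have : |β j + s * e| ≤ |β j| + s := by
        calc |β j + s * e| ≤ |β j| + |s * e| := h1
          _ = |β j| + s := by rw [habse]
      linarith
    have hkk : 2 * s * |g| - s^2 * c ≤ 2 * n * (lam * s) := by
      have e1 : 2 * (s * e) * g - (s*e)^2 * c = 2 * s * |g| - s^2 * c := by
        rw [mul_pow, he2]; rw [show 2 * (s * e) * g = 2 * s * (e * g) by ring, heg]; ring
      rw [e1] at hk
      have e2 : 2 * (n:ℝ) * (lam * (|β j + s * e| - |β j|)) ≤ 2 * n * (lam * s) := by
        apply mul_le_mul_of_nonneg_left _ (by linarith)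
        exact mul_le_mul_of_nonneg_left habs hlam.le
      linarith
    nlinarith [hkk, hs0, mul_pos hs0 hs0]
  · -- g * β j = lam * n * |β j|
    by_cases hβ : β j = 0
    · rw [hβ]; simp
    set σ : ℝ := if 0 < β j then (1:ℝ) else -1 with hσd
    have hσβ : σ * β j = |β j| := by
      rcases lt_trichotomy 0 (β j) with h | h | h
      · rw [hσd, if_pos h, one_mul, abs_of_pos h]
      · exact absurd h.symm hβ
      · rw [hσd, if_neg (not_lt.mpr h.le), abs_of_neg h]; ring
    have hσ2 : σ ^ 2 = 1 := by
      rcases lt_or_ge 0 (β j) with h | h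
      · rw [hσd, if_pos h]; norm_num
      · rw [hσd, if_neg (not_lt.mpr h)]; norm_num
    have hβpos : 0 < |β j| := abs_pos.mpr hβ
    have habs : ∀ t : ℝ, |t| < |β j| → |β j + t| = |β j| + σ * t := by
      intro t ht
      rcases lt_trichotomy 0 (β j) with h | h | h
      · rw [abs_of_pos h] at ht ⊢
        rw [hσd, if_pos h, one_mul, abs_of_pos (by cases abs_lt.mp ht; linarith)]
      · exact absurd h.symm hβ
      · rw [abs_of_neg h] at *
        rw [hσd, if_neg (not_lt.mpr h.le), abs_of_neg (by cases abs_lt.mp ht; linarith)]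
        ring
    have hup : σ * g - lam * n ≤ 0 := by
      apply slope_nonpos _ (c/2) (|β j|) hβpos
      intro s hs0 hsδ
      have hst : |s * σ| = s := by
        rcases lt_or_ge 0 (β j) with h | h
        · rw [hσd, if_pos h, mul_one, abs_of_pos hs0]
        · rw [hσd, if_neg (not_lt.mpr h), abs_of_nonpos (by nlinarith)]; ring
      have hk := key (s * σ)
      rw [habs (s * σ) (by rw [hst]; exact hsδ)] at hk
      have e1 : 2 * (s * σ) * g - (s*σ)^2 * c = 2 * s * (σ * g) - s^2 * c := by
        rw [mul_pow, hσ2]; ring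
      have e2 : |β j| + σ * (s * σ) - |β j| = s := by
        rw [show σ * (s * σ) = s * σ^2 by ring, hσ2]; ring
      rw [e1, e2] at hk
      nlinarith [hk, hs0]
    have hdn : lam * n - σ * g ≤ 0 := by
      apply slope_nonpos _ (c/2) (|β j|) hβpos
      intro s hs0 hsδ
      have hst : |(-(s * σ))| = s := by
        rcases lt_or_ge 0 (β j) with h | h
        · rw [hσd, if_pos h, mul_one, abs_neg, abs_of_pos hs0]
        · rw [hσd, if_neg (not_lt.mpr h), abs_neg, abs_of_nonpos (by nlinarith)]; ring
      have hk := key (-(s * σ))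
      rw [habs (-(s * σ)) (by rw [hst]; exact hsδ)] at hk
      have e1 : 2 * (-(s * σ)) * g - (-(s*σ))^2 * c = -(2 * s * (σ * g)) - s^2 * c := by
        rw [neg_pow, mul_pow, hσ2]; ring
      have e2 : |β j| + σ * (-(s * σ)) - |β j| = -s := by
        rw [show σ * (-(s * σ)) = -(s * σ^2) by ring, hσ2]; ring
      rw [e1, e2] at hk
      nlinarith [hk, hs0]
    have hσg : σ * g = lam * n := le_antisymm (by linarith) (by linarith)
    calc g * β j = σ ^ 2 * (g * β j) := by rw [hσ2, one_mul]
      _ = (σ * g) * (σ * β j) := by ring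
      _ = lam * n * |β j| := by rw [hσg, hσβ]


lemma sum_swap_mul {α β : Type*} (s : Finset α) (t : Finset β)
    (a : α → β → ℝ) (c : α → ℝ) :
    ∑ i ∈ s, (∑ j ∈ t, a i j) * c i = ∑ j ∈ t, ∑ i ∈ s, a i j * c i := by
  simp_rw [Finset.sum_mul]
  rw [Finset.sum_comm]

lemma sum_subtype_eq {m : ℕ} (S : Finset (Fin m)) (F : Fin m → ℝ) (G : ↥S → ℝ)
    (h : ∀ j : ↥S, F j.val = G j) : ∑ k ∈ S, F k = ∑ j : ↥S, G j := by
  rw [← Finset.sum_attach S F, Finset.univ_eq_attach]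
  exact Finset.sum_congr rfl fun j _ => h j

lemma lasso_support (n m : ℕ) (hn : 0 < n) (lam κ : ℝ) (hlam : 0 < lam) (hκ0 : 0 < κ)
    (Hc : Matrix (Fin n) (Fin m) ℝ) (fc : Fin n → ℝ) (βstar : Fin m → ℝ)
    (Sstar : Finset (Fin m)) (hsup : ∀ k ∉ Sstar, βstar k = 0)
    (θ : Fin m → ↥Sstar → ℝ) (w : Fin m → Fin n → ℝ)
    (hw : ∀ k i, w k i = Hc i k - ∑ j : ↥Sstar, Hc i j.val * θ k j)
    (horth : ∀ k, ∀ j : ↥Sstar, (∑ i, w k i * Hc i j.val) = 0)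
    (h1 : ∀ k ∉ Sstar, (∑ j : ↥Sstar, |θ k j|) ≤ 1 - κ)
    (h2 : ∀ k ∉ Sstar, |∑ i, w k i * (fc i - Hc.mulVec βstar i)| ≤ κ * lam * n)
    (β : Fin m → ℝ)
    (hmin : ∀ γ : Fin m → ℝ,
      (2 * n : ℝ)⁻¹ * (∑ i, (fc i - Hc.mulVec β i) ^ 2) + lam * ∑ k, |β k|
        ≤ (2 * n : ℝ)⁻¹ * (∑ i, (fc i - Hc.mulVec γ i) ^ 2) + lam * ∑ k, |γ k|) :
    ∀ k ∉ Sstar, β k = 0 := by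
  have hnR : (0:ℝ) < n := by exact_mod_cast hn
  set r : Fin n → ℝ := fun i => fc i - Hc.mulVec β i with hrdef
  set g : Fin m → ℝ := fun k => ∑ i, Hc i k * r i with hgdef
  have hK1 : ∀ k, |g k| ≤ lam * n := fun k =>
    (lasso_kkt n m hn lam hlam Hc fc β hmin k).1
  have hK2 : ∀ k, g k * β k = lam * n * |β k| := fun k =>
    (lasso_kkt n m hn lam hlam Hc fc β hmin k).2
  set T : ℝ := ∑ k ∈ Sstarᶜ, |β k| with hTdef
  have hT0 : 0 ≤ T := Finset.sum_nonneg fun k _ => abs_nonneg _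
  set W : Fin n → ℝ := fun i => ∑ k ∈ Sstarᶜ, β k * w k i with hWdef
  set εc : Fin n → ℝ := fun i => fc i - Hc.mulVec βstar i with hεdef
  -- Step 2: g k = θ k ⬝ g|_S + w k ⬝ r
  have step2 : ∀ k, g k = (∑ j : ↥Sstar, θ k j * g j.val) + ∑ i, w k i * r i := by
    intro k
    have e1 : ∀ i, Hc i k * r i
        = (∑ j : ↥Sstar, Hc i j.val * θ k j) * r i + w k i * r i := by
      intro i; rw [hw k i]; ring
    have e2 : g k = ∑ i, ((∑ j : ↥Sstar, Hc i j.val * θ k j) * r i + w k i * r i) := by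
      rw [hgdef]; exact Finset.sum_congr rfl fun i _ => e1 i
    rw [e2, Finset.sum_add_distrib, sum_swap_mul]
    congr 1
    apply Finset.sum_congr rfl
    intro j _
    rw [hgdef]
    simp only []
    rw [Finset.mul_sum]
    apply Finset.sum_congr rfl
    intro i _; ring
  -- orthogonality of w k with w-decomposed columns: ∑ i, w k i * w kk i relation
  have horthw : ∀ k kk, (∑ i, w k i * Hc i kk) = ∑ i, w k i * w kk i := by
    intro k kk
    have e1 : ∀ i, w k i * Hc i kk
        = w k i * (∑ j : ↥Sstar, Hc i j.val * θ kk j) + w k i * w kk i := by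
      intro i; rw [hw kk i]; ring
    rw [Finset.sum_congr rfl fun i _ => e1 i, Finset.sum_add_distrib]
    have e2 : ∑ i, w k i * (∑ j : ↥Sstar, Hc i j.val * θ kk j) = 0 := by
      have e3 : ∀ i, w k i * (∑ j : ↥Sstar, Hc i j.val * θ kk j)
          = (∑ j : ↥Sstar, (Hc i j.val * θ kk j)) * w k i := by intro i; ring
      rw [Finset.sum_congr rfl fun i _ => e3 i, sum_swap_mul]
      apply Finset.sum_eq_zero
      intro j _
      have e4 : ∑ i, Hc i j.val * θ kk j * w k i = θ kk j * ∑ i, w k i * Hc i j.val := by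
        rw [Finset.mul_sum]; apply Finset.sum_congr rfl; intro i _; ring
      rw [e4, horth k j, mul_zero]
    rw [e2, zero_add]
  -- Step 3: w k ⬝ r = w k ⬝ εc - w k ⬝ W
  have step3 : ∀ k, (∑ i, w k i * r i) = (∑ i, w k i * εc i) - ∑ i, w k i * W i := by
    intro k
    have e1 : ∀ i, r i = εc i + ∑ kk, Hc i kk * (βstar kk - β kk) := by
      intro i
      simp only [hrdef, hεdef, Matrix.mulVec, dotProduct]
      have hd : ∑ kk, Hc i kk * (βstar kk - β kk)
          = (∑ kk, Hc i kk * βstar kk) - ∑ kk, Hc i kk * β kk := by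
        rw [← Finset.sum_sub_distrib]
        exact Finset.sum_congr rfl fun kk _ => by ring
      rw [hd]; ring
    have e2 : (∑ i, w k i * r i)
        = (∑ i, w k i * εc i) + ∑ kk, (βstar kk - β kk) * (∑ i, w k i * Hc i kk) := by
      have e3 : ∀ i, w k i * r i = w k i * εc i
          + (∑ kk, Hc i kk * (βstar kk - β kk)) * w k i := by
        intro i; rw [e1 i]; ring
      rw [Finset.sum_congr rfl fun i _ => e3 i, Finset.sum_add_distrib, sum_swap_mul]
      congr 1
      apply Finset.sum_congr rfl
      intro kk _
      rw [Finset.mul_sum]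
      apply Finset.sum_congr rfl
      intro i _; ring
    rw [e2]
    have e5 : ∀ kk ∈ Sstar, (βstar kk - β kk) * (∑ i, w k i * Hc i kk) = 0 := by
      intro kk hkk
      rw [show (∑ i, w k i * Hc i kk) = ∑ i, w k i * Hc i (⟨kk, hkk⟩ : ↥Sstar).val from rfl,
        horth k ⟨kk, hkk⟩, mul_zero]
    have e6 : ∑ kk, (βstar kk - β kk) * (∑ i, w k i * Hc i kk)
        = ∑ kk ∈ Sstarᶜ, (βstar kk - β kk) * (∑ i, w k i * Hc i kk) := by
      rw [← Finset.sum_add_sum_compl Sstar]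
      rw [Finset.sum_eq_zero e5, zero_add]
    have e7 : ∀ kk ∈ Sstarᶜ, (βstar kk - β kk) * (∑ i, w k i * Hc i kk)
        = -(β kk * ∑ i, w k i * w kk i) := by
      intro kk hkk
      rw [hsup kk (Finset.mem_compl.mp hkk), horthw k kk]; ring
    have e8 : ∀ kk ∈ Sstarᶜ, β kk * ∑ i, w k i * w kk i
        = ∑ i, (β kk * w kk i) * w k i := by
      intro kk _; rw [Finset.mul_sum]; apply Finset.sum_congr rfl; intro i _; ring
    have e9 : ∑ kk ∈ Sstarᶜ, β kk * ∑ i, w k i * w kk i = ∑ i, w k i * W i := by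
      rw [Finset.sum_congr rfl e8, Finset.sum_comm]
      apply Finset.sum_congr rfl
      intro i _
      rw [hWdef]; simp only []
      rw [Finset.mul_sum]
      apply Finset.sum_congr rfl
      intro kk _; ring
    rw [e6, Finset.sum_congr rfl e7, Finset.sum_neg_distrib, e9]
    ring
  -- Step 4: W = 0
  have hlamn : (0:ℝ) < lam * n := mul_pos hlam hnR
  have step4 : ∀ i, W i = 0 := by
    have hsum : ∑ k ∈ Sstarᶜ, β k * g k = lam * n * T := by
      rw [hTdef, Finset.mul_sum]
      apply Finset.sum_congr rfl
      intro k _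
      rw [mul_comm (β k) (g k), hK2 k]
    have hWW : ∑ k ∈ Sstarᶜ, β k * (∑ i, w k i * W i) = ∑ i, W i ^ 2 := by
      have e1 : ∀ k ∈ Sstarᶜ, β k * (∑ i, w k i * W i) = ∑ i, (β k * w k i) * W i := by
        intro k _; rw [Finset.mul_sum]; apply Finset.sum_congr rfl; intro i _; ring
      rw [Finset.sum_congr rfl e1, Finset.sum_comm]
      apply Finset.sum_congr rfl
      intro i _
      rw [hWdef]; simp only []
      rw [← Finset.sum_mul, pow_two]
    have hexp : lam * n * T = (∑ k ∈ Sstarᶜ, β k * (∑ j : ↥Sstar, θ k j * g j.val))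
        + (∑ k ∈ Sstarᶜ, β k * (∑ i, w k i * εc i)) - ∑ i, W i ^ 2 := by
      rw [← hsum, ← hWW, ← Finset.sum_add_distrib, ← Finset.sum_sub_distrib]
      apply Finset.sum_congr rfl
      intro k _
      rw [step2 k, step3 k]; ring
    have hE1 : (∑ k ∈ Sstarᶜ, β k * (∑ j : ↥Sstar, θ k j * g j.val))
        ≤ (1 - κ) * (lam * n) * T := by
      rw [hTdef, Finset.mul_sum]
      apply Finset.sum_le_sum
      intro k hk
      have hb : |∑ j : ↥Sstar, θ k j * g j.val| ≤ (1 - κ) * (lam * n) := by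
        calc |∑ j : ↥Sstar, θ k j * g j.val| ≤ ∑ j : ↥Sstar, |θ k j * g j.val| :=
              Finset.abs_sum_le_sum_abs _ _
          _ ≤ ∑ j : ↥Sstar, |θ k j| * (lam * n) := by
              apply Finset.sum_le_sum
              intro j _
              rw [abs_mul]
              exact mul_le_mul_of_nonneg_left (hK1 j.val) (abs_nonneg _)
          _ = (∑ j : ↥Sstar, |θ k j|) * (lam * n) := by rw [Finset.sum_mul]
          _ ≤ (1 - κ) * (lam * n) :=
              mul_le_mul_of_nonneg_right (h1 k (Finset.mem_compl.mp hk)) hlamn.le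
      calc β k * (∑ j : ↥Sstar, θ k j * g j.val)
          ≤ |β k * (∑ j : ↥Sstar, θ k j * g j.val)| := le_abs_self _
        _ = |β k| * |∑ j : ↥Sstar, θ k j * g j.val| := abs_mul _ _
        _ ≤ |β k| * ((1 - κ) * (lam * n)) := mul_le_mul_of_nonneg_left hb (abs_nonneg _)
        _ = (1 - κ) * (lam * n) * |β k| := by ring
    have hE2 : (∑ k ∈ Sstarᶜ, β k * (∑ i, w k i * εc i)) ≤ κ * (lam * n) * T := by
      rw [hTdef, Finset.mul_sum]
      apply Finset.sum_le_sum
      intro k hk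
      calc β k * (∑ i, w k i * εc i) ≤ |β k * (∑ i, w k i * εc i)| := le_abs_self _
        _ = |β k| * |∑ i, w k i * εc i| := abs_mul _ _
        _ ≤ |β k| * (κ * lam * n) :=
            mul_le_mul_of_nonneg_left (h2 k (Finset.mem_compl.mp hk)) (abs_nonneg _)
        _ = κ * (lam * n) * |β k| := by ring
    have hW2 : ∑ i, W i ^ 2 ≤ 0 := by nlinarith [hexp, hE1, hE2]
    have hW2' : ∑ i, W i ^ 2 = 0 :=
      le_antisymm hW2 (Finset.sum_nonneg fun i _ => sq_nonneg _)
    intro i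
    have := (Finset.sum_eq_zero_iff_of_nonneg (fun i _ => sq_nonneg (W i))).mp hW2' i
      (Finset.mem_univ i)
    exact (pow_eq_zero_iff two_ne_zero).mp this
  -- Step 5: the ℓ1 comparison
  set θf : Fin m → Fin m → ℝ :=
    fun kk k => if h : k ∈ Sstar then θ kk ⟨k, h⟩ else 0 with hθf
  set δ : Fin m → ℝ := fun k => ∑ kk ∈ Sstarᶜ, β kk * θf kk k with hδ
  set γ : Fin m → ℝ := fun k => if k ∈ Sstar then β k + δ k else 0 with hγ
  have hθfS : ∀ kk, ∀ j : ↥Sstar, θf kk j.val = θ kk j := by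
    intro kk j
    rw [hθf]; simp only []
    rw [dif_pos j.prop]
  have hγv : ∀ i, Hc.mulVec γ i = Hc.mulVec β i := by
    intro i
    simp only [Matrix.mulVec, dotProduct]
    rw [← Finset.sum_add_sum_compl Sstar (fun k => Hc i k * γ k),
        ← Finset.sum_add_sum_compl Sstar (fun k => Hc i k * β k)]
    have hc0 : ∑ k ∈ Sstarᶜ, Hc i k * γ k = 0 := by
      apply Finset.sum_eq_zero
      intro k hk
      rw [hγ]; simp only []
      rw [if_neg (Finset.mem_compl.mp hk), mul_zero]
    rw [hc0, add_zero]
    have hS : ∑ k ∈ Sstar, Hc i k * γ k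
        = (∑ k ∈ Sstar, Hc i k * β k) + ∑ k ∈ Sstar, Hc i k * δ k := by
      rw [← Finset.sum_add_distrib]
      apply Finset.sum_congr rfl
      intro k hk
      rw [hγ]; simp only []
      rw [if_pos hk]; ring
    rw [hS]
    have hδs : ∑ k ∈ Sstar, Hc i k * δ k = ∑ kk ∈ Sstarᶜ, Hc i kk * β kk - W i := by
      have e1 : ∀ k ∈ Sstar, Hc i k * δ k = ∑ kk ∈ Sstarᶜ, (β kk * θf kk k) * Hc i k := by
        intro k _
        rw [hδ]; simp only []
        rw [Finset.mul_sum]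
        apply Finset.sum_congr rfl
        intro kk _; ring
      rw [Finset.sum_congr rfl e1, Finset.sum_comm]
      have e2 : ∀ kk ∈ Sstarᶜ, ∑ k ∈ Sstar, (β kk * θf kk k) * Hc i k
          = Hc i kk * β kk - β kk * w kk i := by
        intro kk _
        have e3 : ∑ k ∈ Sstar, (β kk * θf kk k) * Hc i k
            = β kk * ∑ j : ↥Sstar, Hc i j.val * θ kk j := by
          rw [sum_subtype_eq Sstar _ (fun j => β kk * (Hc i j.val * θ kk j))
            (fun j => by rw [hθfS kk j]; ring), Finset.mul_sum]
        rw [e3, hw kk i]; ring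
      rw [Finset.sum_congr rfl e2, Finset.sum_sub_distrib]
    rw [hδs, step4 i]
    ring
  -- use minimality at γ
  have hmain := hmin γ
  have hquad : ∑ i, (fc i - Hc.mulVec γ i) ^ 2 = ∑ i, (fc i - Hc.mulVec β i) ^ 2 :=
    Finset.sum_congr rfl fun i _ => by rw [hγv i]
  rw [hquad] at hmain
  have hl1 : ∑ k, |β k| ≤ ∑ k, |γ k| := by
    have := le_of_add_le_add_left hmain
    exact le_of_mul_le_mul_left this hlam
  have hγsum : ∑ k, |γ k| = ∑ k ∈ Sstar, |β k + δ k| := by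
    rw [← Finset.sum_add_sum_compl Sstar (fun k => |γ k|)]
    have hc0 : ∑ k ∈ Sstarᶜ, |γ k| = 0 := by
      apply Finset.sum_eq_zero
      intro k hk
      rw [hγ]; simp only []
      rw [if_neg (Finset.mem_compl.mp hk), abs_zero]
    rw [hc0, add_zero]
    apply Finset.sum_congr rfl
    intro k hk
    rw [hγ]; simp only []
    rw [if_pos hk]
  have hβsum : ∑ k, |β k| = (∑ k ∈ Sstar, |β k|) + T := by
    rw [← Finset.sum_add_sum_compl Sstar (fun k => |β k|), hTdef]
  have hδbd : ∑ k ∈ Sstar, |δ k| ≤ (1 - κ) * T := by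
    have e1 : ∀ k ∈ Sstar, |δ k| ≤ ∑ kk ∈ Sstarᶜ, |β kk| * |θf kk k| := by
      intro k _
      rw [hδ]; simp only []
      calc |∑ kk ∈ Sstarᶜ, β kk * θf kk k| ≤ ∑ kk ∈ Sstarᶜ, |β kk * θf kk k| :=
            Finset.abs_sum_le_sum_abs _ _
        _ = ∑ kk ∈ Sstarᶜ, |β kk| * |θf kk k| :=
            Finset.sum_congr rfl fun kk _ => abs_mul _ _
    calc ∑ k ∈ Sstar, |δ k| ≤ ∑ k ∈ Sstar, ∑ kk ∈ Sstarᶜ, |β kk| * |θf kk k| :=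
          Finset.sum_le_sum e1
      _ = ∑ kk ∈ Sstarᶜ, ∑ k ∈ Sstar, |β kk| * |θf kk k| := Finset.sum_comm
      _ ≤ ∑ kk ∈ Sstarᶜ, (1 - κ) * |β kk| := by
          apply Finset.sum_le_sum
          intro kk hkk
          have e2 : ∑ k ∈ Sstar, |β kk| * |θf kk k| = |β kk| * ∑ j : ↥Sstar, |θ kk j| := by
            rw [sum_subtype_eq Sstar _ (fun j => |β kk| * |θ kk j|)
              (fun j => by rw [hθfS kk j]), Finset.mul_sum]
          rw [e2]
          calc |β kk| * ∑ j : ↥Sstar, |θ kk j| ≤ |β kk| * (1 - κ) :=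
                mul_le_mul_of_nonneg_left (h1 kk (Finset.mem_compl.mp hkk)) (abs_nonneg _)
            _ = (1 - κ) * |β kk| := by ring
      _ = (1 - κ) * T := by rw [hTdef, Finset.mul_sum]
  have hTbd : (∑ k ∈ Sstar, |β k|) + T ≤ (∑ k ∈ Sstar, |β k|) + (1 - κ) * T := by
    calc (∑ k ∈ Sstar, |β k|) + T = ∑ k, |β k| := hβsum.symm
      _ ≤ ∑ k, |γ k| := hl1
      _ = ∑ k ∈ Sstar, |β k + δ k| := hγsum
      _ ≤ ∑ k ∈ Sstar, (|β k| + |δ k|) := Finset.sum_le_sum fun k _ => abs_add_le _ _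
      _ = (∑ k ∈ Sstar, |β k|) + ∑ k ∈ Sstar, |δ k| := Finset.sum_add_distrib
      _ ≤ (∑ k ∈ Sstar, |β k|) + (1 - κ) * T := by linarith [hδbd]
  have hTz : T = 0 := by nlinarith [hTbd, hT0, hκ0]
  intro k hk
  have := (Finset.sum_eq_zero_iff_of_nonneg (fun k _ => abs_nonneg (β k))).mp hTz k
    (Finset.mem_compl.mpr hk)
  exact abs_eq_zero.mp this

lemma isUnit_det_of_rank_eq (ι : Type*) [Fintype ι] [DecidableEq ι] (B : Matrix ι ι ℝ)
    (h : B.rank = Fintype.card ι) : IsUnit B.det := by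
  have hr : LinearMap.range B.mulVecLin = ⊤ := by
    apply Submodule.eq_top_of_finrank_eq
    rw [← Matrix.rank, h, Module.finrank_pi]
  have hsurj : Function.Surjective B.mulVecLin := LinearMap.range_eq_top.mp hr
  choose C hC using fun j => hsurj (Pi.single j 1)
  have hBC : B * (Matrix.of fun i j => C j i) = 1 := by
    ext i j
    have := congrFun (hC j) i
    simp [Matrix.mulVecLin_apply, Matrix.mulVec, dotProduct] at this
    simp [Matrix.mul_apply, Matrix.one_apply, Pi.single_apply, this]
  have := congrArg Matrix.det hBC
  rw [Matrix.det_mul, Matrix.det_one] at this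
  exact IsUnit.of_mul_eq_one _ this

/-- Deterministic LASSO support result (Lemma 10 of the paper).  If the
active design `H_{c,S*}` has full column rank `ℓ*` and, for some `κ ∈ (0,1]`, the
regressions `θ̂⁽ᵏ⁾` of the inactive columns on the active ones satisfy
`max_{k∈S̄*}‖θ̂⁽ᵏ⁾‖₁ ≤ 1−κ` and
`max_{k∈S̄*}|(H_{c,k} − H_{c,S*}θ̂⁽ᵏ⁾)ᵀ ε_c| ≤ κλn`, then the LASSO minimizer is
unique, its support is contained in `S*`, and
`max_{k∈S*}|β̂_k − β*_k| ≤ max_{k∈S*}|β̂*_k − β*_k| + nλ‖(H_{c,S*}ᵀH_{c,S*})⁻¹‖_∞`. -/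
theorem lasso_deterministic_support
    (n m : ℕ) (lam : ℝ) (hlam : 0 < lam)
    (Hc : Matrix (Fin n) (Fin m) ℝ) (fc : Fin n → ℝ)
    (βstar : Fin m → ℝ)
    (Sstar : Finset (Fin m)) (hSstar : ∀ k, k ∈ Sstar ↔ βstar k ≠ 0)
    (hSne : Sstar.Nonempty)
    (κ : ℝ) (hκ : κ ∈ Set.Ioc (0 : ℝ) 1)
    (βhat : Fin m → ℝ)
    (hβhat : ∀ β : Fin m → ℝ,
      (2 * n : ℝ)⁻¹ * (∑ i, (fc i - Hc.mulVec βhat i) ^ 2) + lam * ∑ k, |βhat k|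
        ≤ (2 * n : ℝ)⁻¹ * (∑ i, (fc i - Hc.mulVec β i) ^ 2) + lam * ∑ k, |β k|) :
    -- the active design matrix, the residual vector, the inactive-on-active OLS
    -- regression coefficients and the OLS oracle estimate
    let A : Matrix (Fin n) ↥Sstar ℝ := Hc.submatrix id (fun k : ↥Sstar => k.val)
    let εc : Fin n → ℝ := fun i => fc i - Hc.mulVec βstar i
    let θ : Fin m → ↥Sstar → ℝ :=
      fun k => (A.transpose * A)⁻¹.mulVec (A.transpose.mulVec (fun i => Hc i k))
    let βols : ↥Sstar → ℝ := (A.transpose * A)⁻¹.mulVec (A.transpose.mulVec fc)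
    -- hypotheses: full column rank and conditions (i), (ii)
    A.rank = Sstar.card →
    (∀ k ∉ Sstar, (∑ j : ↥Sstar, |θ k j|) ≤ 1 - κ) →
    (∀ k ∉ Sstar,
      |(fun i => Hc i k - A.mulVec (θ k) i) ⬝ᵥ εc| ≤ κ * lam * n) →
    -- conclusions: uniqueness of the LASSO minimizer, support inclusion and the
    -- coefficient error bound
    ((∀ β : Fin m → ℝ,
        (2 * n : ℝ)⁻¹ * (∑ i, (fc i - Hc.mulVec β i) ^ 2) + lam * ∑ k, |β k|
          ≤ (2 * n : ℝ)⁻¹ * (∑ i, (fc i - Hc.mulVec βhat i) ^ 2)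
            + lam * ∑ k, |βhat k| →
        β = βhat)
      ∧ (∀ k ∉ Sstar, βhat k = 0)
      ∧ (∀ k : ↥Sstar, |βhat k.val - βstar k.val|
          ≤ (⨆ j : ↥Sstar, |βols j - βstar j.val|)
            + n * lam * ⨆ i : ↥Sstar, ∑ j : ↥Sstar, |(A.transpose * A)⁻¹ i j|)) := by
  intro A εc θ βols hrank h1 h2
  have hScard : 0 < Sstar.card := Finset.card_pos.mpr hSne
  have hn : 0 < n := by
    have h := Matrix.rank_le_card_height A
    rw [hrank, Fintype.card_fin] at h
    omega
  have hnR : (0:ℝ) < n := by exact_mod_cast hn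
  haveI : Nonempty ↥Sstar := ⟨⟨hSne.choose, hSne.choose_spec⟩⟩
  set B : Matrix ↥Sstar ↥Sstar ℝ := A.transpose * A with hB
  have hBrank : B.rank = Fintype.card ↥Sstar := by
    rw [hB, Matrix.rank_transpose_mul_self, hrank, Fintype.card_coe]
  have hBunit : IsUnit B.det := isUnit_det_of_rank_eq _ B hBrank
  have hBinv : B⁻¹ * B = 1 := Matrix.nonsing_inv_mul B hBunit
  have hBinv' : B * B⁻¹ = 1 := Matrix.mul_nonsing_inv B hBunit
  have hsup : ∀ k ∉ Sstar, βstar k = 0 := fun k hk =>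
    not_not.mp (fun h => hk ((hSstar k).mpr h))
  set w : Fin m → Fin n → ℝ := fun k i => Hc i k - A.mulVec (θ k) i with hwdef
  have hw : ∀ k i, w k i = Hc i k - ∑ j : ↥Sstar, Hc i j.val * θ k j := fun k i => rfl
  have hBθ : ∀ k, B.mulVec (θ k) = A.transpose.mulVec (fun i => Hc i k) := by
    intro k
    show B.mulVec (B⁻¹.mulVec (A.transpose.mulVec fun i => Hc i k)) = _
    rw [Matrix.mulVec_mulVec, hBinv', Matrix.one_mulVec]
  have horth : ∀ k, ∀ j : ↥Sstar, (∑ i, w k i * Hc i j.val) = 0 := by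
    intro k j
    have e1 : ∑ i, w k i * Hc i j.val
        = (A.transpose.mulVec (fun i => Hc i k)) j - (A.transpose.mulVec (A.mulVec (θ k))) j := by
      have e0 : ∀ i, w k i * Hc i j.val
          = Hc i j.val * Hc i k - Hc i j.val * (A.mulVec (θ k) i) := by
        intro i; rw [hwdef]; ring
      rw [Finset.sum_congr rfl fun i _ => e0 i, Finset.sum_sub_distrib]
      rfl
    rw [e1, Matrix.mulVec_mulVec, ← hB, hBθ k, sub_self]
  have h2' : ∀ k ∉ Sstar, |∑ i, w k i * (fc i - Hc.mulVec βstar i)| ≤ κ * lam * n := by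
    intro k hk
    exact h2 k hk
  have hsupβhat : ∀ k ∉ Sstar, βhat k = 0 :=
    lasso_support n m hn lam κ hlam hκ.1 Hc fc βstar Sstar hsup θ w hw horth h1 h2' βhat hβhat
  refine ⟨?_, hsupβhat, ?_⟩
  · -- uniqueness
    intro β hβ
    have hβmin : ∀ γ : Fin m → ℝ,
        (2 * n : ℝ)⁻¹ * (∑ i, (fc i - Hc.mulVec β i) ^ 2) + lam * ∑ k, |β k|
          ≤ (2 * n : ℝ)⁻¹ * (∑ i, (fc i - Hc.mulVec γ i) ^ 2) + lam * ∑ k, |γ k| :=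
      fun γ => le_trans hβ (hβhat γ)
    have hsupβ : ∀ k ∉ Sstar, β k = 0 :=
      lasso_support n m hn lam κ hlam hκ.1 Hc fc βstar Sstar hsup θ w hw horth h1 h2' β hβmin
    have hEq : (2 * n : ℝ)⁻¹ * (∑ i, (fc i - Hc.mulVec β i) ^ 2) + lam * ∑ k, |β k|
        = (2 * n : ℝ)⁻¹ * (∑ i, (fc i - Hc.mulVec βhat i) ^ 2) + lam * ∑ k, |βhat k| :=
      le_antisymm hβ (hβhat β)
    -- fitted values agree
    have hfit : ∀ i, Hc.mulVec β i = Hc.mulVec βhat i := by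
      set γ : Fin m → ℝ := fun k => (β k + βhat k) / 2 with hγ
      have hγv : ∀ i, Hc.mulVec γ i = (Hc.mulVec β i + Hc.mulVec βhat i) / 2 := by
        intro i
        simp only [Matrix.mulVec, dotProduct, hγ]
        rw [← Finset.sum_add_distrib, Finset.sum_div]
        apply Finset.sum_congr rfl
        intro k _; ring
      have hquad : ∑ i, (fc i - Hc.mulVec γ i) ^ 2
          = (∑ i, (fc i - Hc.mulVec β i) ^ 2) / 2 + (∑ i, (fc i - Hc.mulVec βhat i) ^ 2) / 2
            - ∑ i, ((Hc.mulVec β i - Hc.mulVec βhat i) / 2) ^ 2 := by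
        have e1 : ∀ i, (fc i - Hc.mulVec γ i) ^ 2
            = (fc i - Hc.mulVec β i) ^ 2 / 2 + (fc i - Hc.mulVec βhat i) ^ 2 / 2
              - ((Hc.mulVec β i - Hc.mulVec βhat i) / 2) ^ 2 := by
          intro i; rw [hγv i]; ring
        rw [Finset.sum_congr rfl fun i _ => e1 i, Finset.sum_sub_distrib,
          Finset.sum_add_distrib, Finset.sum_div, Finset.sum_div]
      have hl1 : ∑ k, |γ k| ≤ (∑ k, |β k|) / 2 + (∑ k, |βhat k|) / 2 := by
        rw [Finset.sum_div, Finset.sum_div, ← Finset.sum_add_distrib]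
        apply Finset.sum_le_sum
        intro k _
        rw [hγ]
        have := abs_add_le (β k) (βhat k)
        rw [abs_div, abs_two]
        linarith
      have hmain := hβhat γ
      rw [hquad] at hmain
      have hγbd : lam * ∑ k, |γ k| ≤ lam * ((∑ k, |β k|) / 2 + (∑ k, |βhat k|) / 2) :=
        mul_le_mul_of_nonneg_left hl1 hlam.le
      set Q : ℝ := ∑ i, ((Hc.mulVec β i - Hc.mulVec βhat i) / 2) ^ 2 with hQ
      have hexpand : (2 * (n:ℝ))⁻¹ * ((∑ i, (fc i - Hc.mulVec β i) ^ 2) / 2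
            + (∑ i, (fc i - Hc.mulVec βhat i) ^ 2) / 2 - Q)
          = ((2 * (n:ℝ))⁻¹ * ∑ i, (fc i - Hc.mulVec β i) ^ 2) / 2
            + ((2 * (n:ℝ))⁻¹ * ∑ i, (fc i - Hc.mulVec βhat i) ^ 2) / 2
            - (2 * (n:ℝ))⁻¹ * Q := by ring
      rw [hexpand] at hmain
      have hQle : (2 * (n:ℝ))⁻¹ * Q ≤ 0 := by linarith
      have hQ0 : Q ≤ 0 := by
        have hpos : (0:ℝ) < (2 * (n:ℝ))⁻¹ := by positivity
        nlinarith
      have hQz : Q = 0 := le_antisymm hQ0 (Finset.sum_nonneg fun i _ => sq_nonneg _)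
      intro i
      have := (Finset.sum_eq_zero_iff_of_nonneg
        (fun i _ => sq_nonneg ((Hc.mulVec β i - Hc.mulVec βhat i) / 2))).mp hQz i
        (Finset.mem_univ i)
      have := (pow_eq_zero_iff two_ne_zero).mp this
      have h2' : Hc.mulVec β i - Hc.mulVec βhat i = 0 := by
        field_simp at this
        linarith [this]
      linarith
    -- now derive β = βhat
    have hd : ∀ j : ↥Sstar, β j.val = βhat j.val := by
      set d : ↥Sstar → ℝ := fun j => β j.val - βhat j.val with hdd
      have hAd : A.mulVec d = 0 := by
        funext i
        have e1 : A.mulVec d i = ∑ k ∈ Sstar, Hc i k * (β k - βhat k) := by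
          show ∑ j : ↥Sstar, Hc i j.val * (β j.val - βhat j.val) = _
          rw [← Finset.sum_attach Sstar (fun k => Hc i k * (β k - βhat k)),
            Finset.univ_eq_attach]
        have e2 : ∑ k ∈ Sstar, Hc i k * (β k - βhat k)
            = ∑ k, Hc i k * (β k - βhat k) := by
          apply Finset.sum_subset (Finset.subset_univ Sstar)
          intro k _ hk
          rw [hsupβ k hk, hsupβhat k hk]; ring
        have e3 : ∑ k, Hc i k * (β k - βhat k) = Hc.mulVec β i - Hc.mulVec βhat i := by
          simp only [Matrix.mulVec, dotProduct]
          rw [← Finset.sum_sub_distrib]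
          apply Finset.sum_congr rfl
          intro k _; ring
        rw [e1, e2, e3, hfit i, sub_self]
        rfl
      have hBd : B.mulVec d = 0 := by
        rw [hB, ← Matrix.mulVec_mulVec, hAd, Matrix.mulVec_zero]
      have hd0 : d = 0 := by
        calc d = (B⁻¹ * B).mulVec d := by rw [hBinv, Matrix.one_mulVec]
          _ = B⁻¹.mulVec (B.mulVec d) := (Matrix.mulVec_mulVec _ _ _).symm
          _ = 0 := by rw [hBd, Matrix.mulVec_zero]
      intro j
      have := congrFun hd0 j
      rw [hdd] at this
      simp only [Pi.zero_apply] at this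
      linarith [this]
    funext k
    by_cases hk : k ∈ Sstar
    · exact hd ⟨k, hk⟩
    · rw [hsupβ k hk, hsupβhat k hk]
  · -- the error bound
    set rv : Fin n → ℝ := fun i => fc i - Hc.mulVec βhat i with hrv
    set gS : ↥Sstar → ℝ := fun j => ∑ i, Hc i j.val * rv i with hgS
    have hK1 : ∀ j : ↥Sstar, |gS j| ≤ lam * n := fun j =>
      (lasso_kkt n m hn lam hlam Hc fc βhat hβhat j.val).1
    set βhatS : ↥Sstar → ℝ := fun j => βhat j.val with hβhatSdef
    have hAβ : A.mulVec βhatS = Hc.mulVec βhat := by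
      funext i
      have e1 : A.mulVec βhatS i = ∑ k ∈ Sstar, Hc i k * βhat k := by
        show ∑ j : ↥Sstar, Hc i j.val * βhat j.val = _
        rw [← Finset.sum_attach Sstar (fun k => Hc i k * βhat k), Finset.univ_eq_attach]
      rw [e1]
      apply Finset.sum_subset (Finset.subset_univ Sstar)
      intro k _ hk
      rw [hsupβhat k hk, mul_zero]
    have hkey : B.mulVec βhatS = A.transpose.mulVec fc - gS := by
      rw [hB, ← Matrix.mulVec_mulVec, hAβ]
      funext j
      show ∑ i, Hc i j.val * Hc.mulVec βhat i = (A.transpose.mulVec fc) j - gS j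
      have e1 : (A.transpose.mulVec fc) j = ∑ i, Hc i j.val * fc i := rfl
      rw [e1, hgS]
      simp only []
      rw [← Finset.sum_sub_distrib]
      apply Finset.sum_congr rfl
      intro i _
      rw [hrv]
      ring
    have hβols : βols = B⁻¹.mulVec (A.transpose.mulVec fc) := rfl
    have hβhatS : βhatS = βols - B⁻¹.mulVec gS := by
      have e1 : B⁻¹.mulVec (B.mulVec βhatS) = B⁻¹.mulVec (A.transpose.mulVec fc - gS) := by
        rw [hkey]
      rw [Matrix.mulVec_mulVec, hBinv, Matrix.one_mulVec, Matrix.mulVec_sub] at e1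
      rw [e1, hβols]
    intro k
    have hdecomp : βhat k.val - βstar k.val
        = (βols k - βstar k.val) - (B⁻¹.mulVec gS) k := by
      have := congrFun hβhatS k
      rw [hβhatSdef] at this
      simp only [Pi.sub_apply] at this
      rw [this]
      ring
    have habs : |βhat k.val - βstar k.val|
        ≤ |βols k - βstar k.val| + |(B⁻¹.mulVec gS) k| := by
      rw [hdecomp]
      exact abs_sub _ _
    have hbd1 : |βols k - βstar k.val| ≤ ⨆ j : ↥Sstar, |βols j - βstar j.val| :=
      le_ciSup (f := fun j : ↥Sstar => |βols j - βstar j.val|)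
        (Set.Finite.bddAbove (Set.finite_range _)) k
    have hbd2 : |(B⁻¹.mulVec gS) k| ≤ (lam * n) * ∑ j : ↥Sstar, |B⁻¹ k j| := by
      have e1 : (B⁻¹.mulVec gS) k = ∑ j : ↥Sstar, B⁻¹ k j * gS j := rfl
      rw [e1]
      calc |∑ j : ↥Sstar, B⁻¹ k j * gS j| ≤ ∑ j : ↥Sstar, |B⁻¹ k j * gS j| :=
            Finset.abs_sum_le_sum_abs _ _
        _ ≤ ∑ j : ↥Sstar, |B⁻¹ k j| * (lam * n) := by
            apply Finset.sum_le_sum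
            intro j _
            rw [abs_mul]
            exact mul_le_mul_of_nonneg_left (hK1 j) (abs_nonneg _)
        _ = (lam * n) * ∑ j : ↥Sstar, |B⁻¹ k j| := by
            rw [Finset.mul_sum]
            apply Finset.sum_congr rfl
            intro j _; ring
    have hbd3 : ∑ j : ↥Sstar, |B⁻¹ k j| ≤ ⨆ i : ↥Sstar, ∑ j : ↥Sstar, |B⁻¹ i j| :=
      le_ciSup (f := fun i : ↥Sstar => ∑ j : ↥Sstar, |B⁻¹ i j|)
        (Set.Finite.bddAbove (Set.finite_range _)) k
    have hlamn : (0:ℝ) ≤ lam * n := by positivity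
    calc |βhat k.val - βstar k.val|
        ≤ |βols k - βstar k.val| + |(B⁻¹.mulVec gS) k| := habs
      _ ≤ (⨆ j : ↥Sstar, |βols j - βstar j.val|)
          + (lam * n) * ⨆ i : ↥Sstar, ∑ j : ↥Sstar, |B⁻¹ i j| := by
          have := mul_le_mul_of_nonneg_left hbd3 hlamn
          have h2 := le_trans hbd2 this
          exact add_le_add hbd1 h2
      _ = (⨆ j : ↥Sstar, |βols j - βstar j.val|)
          + n * lam * ⨆ i : ↥Sstar, ∑ j : ↥Sstar, |B⁻¹ i j| := by ring
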